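/- Let λ* = (λ₁*,…,λ₆*) ∈ ℝ⁶ satisfy λ₁* = λ₂* = λ₄* = λ₅* = 0 and λ₃* ≠ λ₆* (i.e. λ* is a smooth point of the intersection I₂ ∩ I₃, not on I₁). Then the ideal of ℝ[λ₁,…,λ₆] generated by the Kapteyn–Bautin polynomials v₁, v₂, v₃, v₄ and the ideal generated by λ₁, λ₅, λ₂λ₄ coincide locally at λ*. -/

import Mathlib

open MvPolynomial

/-- The multiplicative set of polynomials not vanishing at `p`, i.e. the complement of
the maximal ideal of polynomials vanishing at `p`. -/
def nonVanishing (K : Type*) [Field K] (p : Fin 6 → K) :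
    Submonoid (MvPolynomial (Fin 6) K) where
  carrier := {f | eval p f ≠ 0}
  mul_mem' := by
    intro a b ha hb
    simp only [Set.mem_setOf_eq, map_mul] at ha hb ⊢
    exact mul_ne_zero ha hb
  one_mem' := by simp

/-- Two ideals of `K[λ₁,…,λ₆]` coincide locally at `p` if their extensions to the
localization of the polynomial ring at the maximal ideal of polynomials vanishing at `p`
(equivalently, the localization inverting all polynomials not vanishing at `p`) are equal. -/
def coincideLocally (K : Type*) [Field K] (p : Fin 6 → K)
    (I J : Ideal (MvPolynomial (Fin 6) K)) : Prop :=
  Ideal.map (algebraMap (MvPolynomial (Fin 6) K) (Localization (nonVanishing K p))) I =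
  Ideal.map (algebraMap (MvPolynomial (Fin 6) K) (Localization (nonVanishing K p))) J

/-- The Bautin ideal of the Kapteyn normal form, generated by the Kapteyn–Bautin
polynomials `v₁ = λ₁`, `v₂ = λ₅(λ₃−λ₆)`, `v₃ = λ₂λ₄(λ₃−λ₆)(λ₄+5λ₃−5λ₆)`,
`v₄ = λ₂λ₄(λ₃−λ₆)²(λ₃λ₆−2λ₆²−λ₂²)`, where `X 0 = λ₁, …, X 5 = λ₆`. -/
noncomputable def bautinIdeal (K : Type*) [Field K] : Ideal (MvPolynomial (Fin 6) K) :=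
  Ideal.span {X 0, X 4 * (X 2 - X 5),
    X 1 * X 3 * (X 2 - X 5) * (X 3 + 5 * X 2 - 5 * X 5),
    X 1 * X 3 * (X 2 - X 5) ^ 2 * (X 2 * X 5 - 2 * X 5 ^ 2 - X 1 ^ 2)}

/-- at a smooth point `λ*` of `I₂ ∩ I₃` not on `I₁`
(`λ₁* = λ₂* = λ₄* = λ₅* = 0`, `λ₃* ≠ λ₆*`, base field `ℝ`), the Bautin ideal
coincides locally at `λ*` with the ideal `(λ₁, λ₅, λ₂λ₄)`. -/
theorem stmt_10 (l1 l2 l3 l4 l5 l6 : ℝ)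
    (h1 : l1 = 0) (h2 : l2 = 0) (h4 : l4 = 0) (h5 : l5 = 0)
    (h36 : l3 ≠ l6) :
    coincideLocally ℝ ![l1, l2, l3, l4, l5, l6]
      (bautinIdeal ℝ)
      (Ideal.span {X 0, X 4, X 1 * X 3}) := by

  subst h1 h2 h4 h5
  set p : Fin 6 → ℝ := ![0, 0, l3, 0, 0, l6] with hp
  set L := Localization (nonVanishing ℝ p) with hL
  set φ : MvPolynomial (Fin 6) ℝ →+* L :=
    algebraMap (MvPolynomial (Fin 6) ℝ) L with hφ
  have h36' : l3 - l6 ≠ 0 := sub_ne_zero.mpr h36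
  have hu1 : IsUnit (φ (X 2 - X 5)) := by
    have hm : (X 2 - X 5 : MvPolynomial (Fin 6) ℝ) ∈ nonVanishing ℝ p := by
      show eval p (X 2 - X 5) ≠ 0
      have e : eval p (X 2 - X 5) = l3 - l6 := by
        rw [map_sub, eval_X, eval_X]; rfl
      rw [e]; exact h36'
    exact IsLocalization.map_units L (⟨_, hm⟩ : nonVanishing ℝ p)
  have hu2 : IsUnit (φ (X 3 + 5 * X 2 - 5 * X 5)) := by
    have hm : (X 3 + 5 * X 2 - 5 * X 5 : MvPolynomial (Fin 6) ℝ) ∈ nonVanishing ℝ p := by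
      show eval p (X 3 + 5 * X 2 - 5 * X 5) ≠ 0
      have e : eval p (X 3 + 5 * X 2 - 5 * X 5) = p 3 + 5 * p 2 - 5 * p 5 := by
        simp
      have e' : p 3 + 5 * p 2 - 5 * p 5 = (0 : ℝ) + 5 * l3 - 5 * l6 := rfl
      rw [e, e']
      have h5 : (0 : ℝ) + 5 * l3 - 5 * l6 = 5 * (l3 - l6) := by ring
      rw [h5]
      exact mul_ne_zero (by norm_num) h36'
    exact IsLocalization.map_units L (⟨_, hm⟩ : nonVanishing ℝ p)
  show Ideal.map φ _ = Ideal.map φ _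
  unfold bautinIdeal
  rw [Ideal.map_span, Ideal.map_span]
  apply le_antisymm
  · rw [Ideal.span_le]
    rintro _ ⟨y, hy, rfl⟩
    have m0 : φ (X 0) ∈ Ideal.span (φ '' {X 0, X 4, X 1 * X 3}) :=
      Ideal.subset_span ⟨X 0, by simp, rfl⟩
    have m4 : φ (X 4) ∈ Ideal.span (φ '' {X 0, X 4, X 1 * X 3}) :=
      Ideal.subset_span ⟨X 4, by simp, rfl⟩
    have m13 : φ (X 1 * X 3) ∈ Ideal.span (φ '' {X 0, X 4, X 1 * X 3}) :=
      Ideal.subset_span ⟨X 1 * X 3, by simp, rfl⟩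
    simp only [Set.mem_insert_iff, Set.mem_singleton_iff] at hy
    rcases hy with rfl | rfl | rfl | rfl
    · exact m0
    · rw [map_mul]; exact Ideal.mul_mem_right _ _ m4
    · have e : (X 1 * X 3 * (X 2 - X 5) * (X 3 + 5 * X 2 - 5 * X 5) :
          MvPolynomial (Fin 6) ℝ) =
          X 1 * X 3 * ((X 2 - X 5) * (X 3 + 5 * X 2 - 5 * X 5)) := by ring
      rw [e, map_mul]; exact Ideal.mul_mem_right _ _ m13
    · have e : (X 1 * X 3 * (X 2 - X 5) ^ 2 * (X 2 * X 5 - 2 * X 5 ^ 2 - X 1 ^ 2) :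
          MvPolynomial (Fin 6) ℝ) =
          X 1 * X 3 * ((X 2 - X 5) ^ 2 * (X 2 * X 5 - 2 * X 5 ^ 2 - X 1 ^ 2)) := by ring
      rw [e, map_mul]; exact Ideal.mul_mem_right _ _ m13
  · rw [Ideal.span_le]
    rintro _ ⟨y, hy, rfl⟩
    set S : Set (MvPolynomial (Fin 6) ℝ) :=
      {X 0, X 4 * (X 2 - X 5),
        X 1 * X 3 * (X 2 - X 5) * (X 3 + 5 * X 2 - 5 * X 5),
        X 1 * X 3 * (X 2 - X 5) ^ 2 * (X 2 * X 5 - 2 * X 5 ^ 2 - X 1 ^ 2)} with hS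
    have m1 : φ (X 0) ∈ Ideal.span (φ '' S) :=
      Ideal.subset_span ⟨X 0, by simp [hS], rfl⟩
    have m2 : φ (X 4 * (X 2 - X 5)) ∈ Ideal.span (φ '' S) :=
      Ideal.subset_span ⟨X 4 * (X 2 - X 5), by simp [hS], rfl⟩
    have m3 : φ (X 1 * X 3 * (X 2 - X 5) * (X 3 + 5 * X 2 - 5 * X 5)) ∈
        Ideal.span (φ '' S) :=
      Ideal.subset_span ⟨_, by simp [hS], rfl⟩
    simp only [Set.mem_insert_iff, Set.mem_singleton_iff] at hy
    rcases hy with rfl | rfl | rfl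
    · exact m1
    · have h := Ideal.mul_mem_right (↑hu1.unit⁻¹ : L) _ m2
      rwa [map_mul, mul_assoc, hu1.mul_val_inv, mul_one] at h
    · have h := Ideal.mul_mem_right ((↑hu2.unit⁻¹ : L) * (↑hu1.unit⁻¹ : L)) _ m3
      have e : φ (X 1 * X 3 * (X 2 - X 5) * (X 3 + 5 * X 2 - 5 * X 5)) *
          ((↑hu2.unit⁻¹ : L) * (↑hu1.unit⁻¹ : L)) = φ (X 1 * X 3) := by
        rw [map_mul, map_mul,
          mul_assoc (φ (X 1 * X 3) * φ (X 2 - X 5)) (φ (X 3 + 5 * X 2 - 5 * X 5)),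
          ← mul_assoc (φ (X 3 + 5 * X 2 - 5 * X 5)),
          hu2.mul_val_inv, one_mul, mul_assoc, hu1.mul_val_inv, mul_one]
      rwa [e] at h
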